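/- The DsIW(θ,ζ) distribution has infinite mean for any 0 < θ < 1 and 0 < ζ ≤ 1: if X ~ DsIW(θ,ζ) then E[X] = Σ_{x=0}^∞ P(X > x) = Σ_{x=0}^∞ (1 − θ^((x+1)^(−ζ))) = ∞. -/

import Mathlib

open MeasureTheory ProbabilityTheory Filter Real Set

/-- CDF of the discrete inverse Weibull distribution: `F(x;θ,ζ) = θ^((x+1)^(-ζ))`. -/
noncomputable def dsiwCDF (θ ζ : ℝ) (x : ℕ) : ℝ := θ ^ (((x : ℝ) + 1) ^ (-ζ))

/-- `θ^(x^(-ζ))` with the convention `θ^(0^(-ζ)) = 0`. -/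
noncomputable def dsiwC (θ ζ : ℝ) (x : ℕ) : ℝ := if x = 0 then 0 else θ ^ ((x : ℝ) ^ (-ζ))

/-- PMF of the discrete inverse Weibull distribution. -/
noncomputable def dsiwPMF (θ ζ : ℝ) (x : ℕ) : ℝ := dsiwCDF θ ζ x - dsiwC θ ζ x

lemma natCast_eq_tsum_indicator (k : ℕ) :
    (k : ENNReal) = ∑' n : ℕ, if n < k then (1:ENNReal) else 0 := by
  rw [tsum_eq_sum (s := Finset.range k) (fun n hn => by
    simp only [Finset.mem_range, not_lt] at hn
    simp [Nat.not_lt.mpr hn])]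
  rw [Finset.sum_congr rfl (fun n hn => if_pos (Finset.mem_range.mp hn))]
  simp

theorem dsiw_infinite_mean {Ω : Type*} [MeasurableSpace Ω] (μ : Measure Ω)
    [IsProbabilityMeasure μ] (θ ζ : ℝ) (hθ : θ ∈ Set.Ioo (0:ℝ) 1)
    (hζ : 0 < ζ) (hζ1 : ζ ≤ 1)
    (X : Ω → ℕ) (hX : Measurable X)
    (hcdf : ∀ x, μ {ω | X ω ≤ x} = ENNReal.ofReal (dsiwCDF θ ζ x)) :
    (∫⁻ ω, (X ω : ENNReal) ∂μ) = ∑' x : ℕ, μ {ω | x < X ω} ∧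
    (∑' x : ℕ, μ {ω | x < X ω}) = ∑' x : ℕ, ENNReal.ofReal (1 - dsiwCDF θ ζ x) ∧
    (∑' x : ℕ, ENNReal.ofReal (1 - dsiwCDF θ ζ x)) = ⊤ ∧
    (∫⁻ ω, (X ω : ENNReal) ∂μ) = ⊤ := by
  obtain ⟨hθ0, hθ1⟩ := hθ
  have hmeas : ∀ n : ℕ, MeasurableSet {ω | n < X ω} := fun n => hX measurableSet_Ioi
  -- positivity/bounds on the CDF
  have hsx : ∀ x : ℕ, 0 < ((x : ℝ) + 1) ^ (-ζ) := fun x =>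
    Real.rpow_pos_of_pos (by positivity) _
  have hF0 : ∀ x : ℕ, 0 < dsiwCDF θ ζ x := fun x => Real.rpow_pos_of_pos hθ0 _
  have hF1 : ∀ x : ℕ, dsiwCDF θ ζ x ≤ 1 := fun x =>
    Real.rpow_le_one hθ0.le hθ1.le (hsx x).le
  -- Part 1: tail-sum formula
  have h1 : (∫⁻ ω, (X ω : ENNReal) ∂μ) = ∑' x : ℕ, μ {ω | x < X ω} := by
    calc (∫⁻ ω, (X ω : ENNReal) ∂μ)
        = ∫⁻ ω, ∑' n : ℕ, Set.indicator {ω' | n < X ω'} (1 : Ω → ENNReal) ω ∂μ := by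
          refine lintegral_congr fun ω => ?_
          rw [natCast_eq_tsum_indicator (X ω)]
          refine tsum_congr fun n => ?_
          by_cases h : n < X ω <;> simp [Set.indicator_apply, h]
      _ = ∑' n : ℕ, ∫⁻ ω, Set.indicator {ω' | n < X ω'} (1 : Ω → ENNReal) ω ∂μ :=
          lintegral_tsum fun n => (measurable_const.indicator (hmeas n)).aemeasurable
      _ = ∑' n : ℕ, μ {ω | n < X ω} := by
          refine tsum_congr fun n => ?_
          rw [lintegral_indicator_one (hmeas n)]
  -- Part 2: survival function
  have h2 : ∀ x : ℕ, μ {ω | x < X ω} = ENNReal.ofReal (1 - dsiwCDF θ ζ x) := by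
    intro x
    have hc : {ω | x < X ω} = {ω | X ω ≤ x}ᶜ := by ext ω; simp [not_le]
    have hm : MeasurableSet {ω | X ω ≤ x} := hX measurableSet_Iic
    rw [hc, prob_compl_eq_one_sub hm, hcdf x,
      ENNReal.ofReal_sub _ (hF0 x).le, ENNReal.ofReal_one]
  -- Part 3: divergence
  set c : ℝ := -Real.log θ with hc_def
  have hc : 0 < c := by
    have := Real.log_neg hθ0 hθ1
    linarith
  have hbound : ∀ x : ℕ, (c / (1 + c)) * (1 / ((x : ℝ) + 1)) ≤ 1 - dsiwCDF θ ζ x := by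
    intro x
    set s : ℝ := ((x : ℝ) + 1) ^ (-ζ) with hs_def
    have hs0 : 0 < s := hsx x
    have hb1 : (1:ℝ) ≤ (x : ℝ) + 1 := by linarith [Nat.cast_nonneg (α := ℝ) x]
    have hs1 : s ≤ 1 := Real.rpow_le_one_of_one_le_of_nonpos hb1 (by linarith)
    have hs_ge : 1 / ((x : ℝ) + 1) ≤ s := by
      have := Real.rpow_le_rpow_of_exponent_le hb1 (by linarith : -(1:ℝ) ≤ -ζ)
      rwa [Real.rpow_neg_one, ← one_div] at this
    have hexp : dsiwCDF θ ζ x ≤ (1 + c * s)⁻¹ := by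
      have h1cs : (0:ℝ) < 1 + c * s := by positivity
      have := Real.add_one_le_exp (c * s)
      have hrw : dsiwCDF θ ζ x = Real.exp (-(c * s)) := by
        rw [dsiwCDF, Real.rpow_def_of_pos hθ0]
        congr 1
        rw [hc_def]; ring
      rw [hrw, Real.exp_neg]
      exact inv_anti₀ h1cs (by linarith)
    have h1cs : (0:ℝ) < 1 + c * s := by positivity
    have h3 : 1 - (1 + c * s)⁻¹ = c * s / (1 + c * s) := by field_simp; ring
    have h4 : c * s / (1 + c) ≤ c * s / (1 + c * s) := by
      apply div_le_div_of_nonneg_left (by positivity) h1cs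
      nlinarith
    have h5 : (c / (1 + c)) * (1 / ((x : ℝ) + 1)) ≤ (c / (1 + c)) * s :=
      mul_le_mul_of_nonneg_left hs_ge (by positivity)
    have h6 : (c / (1 + c)) * s = c * s / (1 + c) := by ring
    linarith
  have h3 : (∑' x : ℕ, ENNReal.ofReal (1 - dsiwCDF θ ζ x)) = ⊤ := by
    by_contra h
    have hsum : Summable (fun x : ℕ => 1 - dsiwCDF θ ζ x) := by
      have := ENNReal.summable_toReal h
      refine this.congr fun x => ?_
      rw [ENNReal.toReal_ofReal (by linarith [hF1 x])]
    have hsum2 : Summable (fun x : ℕ => (c / (1 + c)) * (1 / ((x : ℝ) + 1))) :=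
      hsum.of_nonneg_of_le (fun x => by positivity) hbound
    have hsum3 : Summable (fun x : ℕ => 1 / ((x : ℝ) + 1)) := by
      have := hsum2.mul_left ((1 + c) / c)
      refine this.congr fun x => ?_
      field_simp
    have hsum4 : Summable (fun n : ℕ => (1 : ℝ) / n) := by
      rw [← summable_nat_add_iff 1]
      exact hsum3.congr fun n => by push_cast; ring
    exact Real.not_summable_one_div_natCast hsum4
  refine ⟨h1, tsum_congr h2, h3, ?_⟩
  rw [h1, tsum_congr h2, h3]
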